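/- arXiv:2506.14929 — 2 statements merged into one kernel-verified Lean document; each statement's English description precedes it below -/
import Mathlib

section
/- The expected loss E_{Φ ~ GS(α)}[L(Φ, Ψ)], viewed as a function of the parameter matrix α (with all entries α_{i,j} ≥ ν > 0), is L-smooth with smoothness constant L = nGN(τ+1)/(τ²ν²); i.e., for all α, α', f(α') − f(α) ≤ ⟨∇f(α), α' − α⟩ + (L/2)‖α' − α‖². -/
open Finset RealInnerProductSpace

namespace ELSmooth

variable {n N : ℕ}

/-- Coordinate along the segment. -/
noncomputable def Xc (a v : EuclideanSpace ℝ (Fin n × Fin N)) (i : Fin n) (j : Fin N) (t : ℝ) :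
    ℝ := a (i, j) + t * v (i, j)

noncomputable def Ec (τ : ℝ) (g : Fin n → Fin N → ℝ) (a v : EuclideanSpace ℝ (Fin n × Fin N))
    (i : Fin n) (j : Fin N) (t : ℝ) : ℝ :=
  Real.exp ((Real.log (Xc a v i j t) + g i j) / τ)

noncomputable def Zc (τ : ℝ) (g : Fin n → Fin N → ℝ) (a v : EuclideanSpace ℝ (Fin n × Fin N))
    (i : Fin n) (t : ℝ) : ℝ := ∑ j, Ec τ g a v i j t

noncomputable def Qc (τ : ℝ) (g : Fin n → Fin N → ℝ) (a v : EuclideanSpace ℝ (Fin n × Fin N))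
    (i : Fin n) (j : Fin N) (t : ℝ) : ℝ := Ec τ g a v i j t / Zc τ g a v i t

noncomputable def Uc (τ : ℝ) (a v : EuclideanSpace ℝ (Fin n × Fin N))
    (i : Fin n) (j : Fin N) (t : ℝ) : ℝ := v (i, j) / (τ * Xc a v i j t)

noncomputable def Sc (τ : ℝ) (g : Fin n → Fin N → ℝ) (a v : EuclideanSpace ℝ (Fin n × Fin N))
    (i : Fin n) (t : ℝ) : ℝ :=
  (∑ j, Ec τ g a v i j t * Uc τ a v i j t) / Zc τ g a v i t

noncomputable def SDc (τ : ℝ) (g : Fin n → Fin N → ℝ) (a v : EuclideanSpace ℝ (Fin n × Fin N))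
    (i : Fin n) (t : ℝ) : ℝ :=
  ∑ j, Qc τ g a v i j t *
    ((Uc τ a v i j t - Sc τ g a v i t) * Uc τ a v i j t - τ * Uc τ a v i j t ^ 2)

section DerivLemmas

variable {τ : ℝ} {g : Fin n → Fin N → ℝ} {a v : EuclideanSpace ℝ (Fin n × Fin N)} {t : ℝ}

lemma hasDerivAt_Xc (i : Fin n) (j : Fin N) :
    HasDerivAt (Xc a v i j) (v (i, j)) t := by
  exact (((hasDerivAt_id t).mul_const (v (i, j))).const_add (a (i, j))).congr_deriv (one_mul _)

lemma Ec_pos (i : Fin n) (j : Fin N) : 0 < Ec τ g a v i j t := Real.exp_pos _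

lemma Zc_pos (hN : 0 < N) (i : Fin n) : 0 < Zc τ g a v i t := by
  have : (univ : Finset (Fin N)).Nonempty := univ_nonempty_iff.2 (Fin.pos_iff_nonempty.1 hN)
  exact Finset.sum_pos (fun j _ => Ec_pos i j) this

lemma Qc_pos (hN : 0 < N) (i : Fin n) (j : Fin N) : 0 < Qc τ g a v i j t :=
  div_pos (Ec_pos i j) (Zc_pos hN i)

lemma Qc_sum (hN : 0 < N) (i : Fin n) : ∑ j, Qc τ g a v i j t = 1 := by
  simp only [Qc, ← Finset.sum_div]
  exact div_self (Zc_pos hN i).ne'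

lemma Qc_le_one (hN : 0 < N) (i : Fin n) (j : Fin N) : Qc τ g a v i j t ≤ 1 := by
  have h := Qc_sum (τ := τ) (g := g) (a := a) (v := v) (t := t) hN i
  have := Finset.single_le_sum (f := fun j => Qc τ g a v i j t)
    (fun j _ => (Qc_pos hN i j).le) (Finset.mem_univ j)
  linarith

lemma Sc_eq (i : Fin n) :
    Sc τ g a v i t = ∑ j, Qc τ g a v i j t * Uc τ a v i j t := by
  rw [Sc, Finset.sum_div]
  exact Finset.sum_congr rfl fun j _ => by rw [Qc, div_mul_eq_mul_div]

lemma hasDerivAt_Ec (hτ : 0 < τ) (i : Fin n) (j : Fin N) (hX : 0 < Xc a v i j t) :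
    HasDerivAt (Ec τ g a v i j) (Ec τ g a v i j t * Uc τ a v i j t) t := by
  have h1 : HasDerivAt (fun t => (Real.log (Xc a v i j t) + g i j) / τ)
      (v (i, j) / Xc a v i j t / τ) t := by
    have hlog : HasDerivAt (fun t => Real.log (Xc a v i j t)) (v (i, j) / Xc a v i j t) t :=
      (hasDerivAt_Xc i j).log hX.ne'
    simpa using (hlog.add_const (g i j)).div_const τ
  have := h1.exp
  convert this using 1
  · rfl
  rw [Ec, Uc]
  rw [div_div]
  ring

lemma hasDerivAt_Zc (hτ : 0 < τ) (i : Fin n) (hX : ∀ j, 0 < Xc a v i j t) :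
    HasDerivAt (Zc τ g a v i) (∑ j, Ec τ g a v i j t * Uc τ a v i j t) t :=
  HasDerivAt.fun_sum (fun j _ => hasDerivAt_Ec hτ i j (hX j))

lemma hasDerivAt_Qc (hτ : 0 < τ) (hN : 0 < N) (i : Fin n) (j : Fin N)
    (hX : ∀ j, 0 < Xc a v i j t) :
    HasDerivAt (Qc τ g a v i j)
      (Qc τ g a v i j t * (Uc τ a v i j t - Sc τ g a v i t)) t := by
  have hZ : Zc τ g a v i t ≠ 0 := (Zc_pos hN i).ne'
  have h := (hasDerivAt_Ec (g := g) hτ i j (hX j)).div (hasDerivAt_Zc (g := g) hτ i hX) hZ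
  refine h.congr_deriv (Eq.symm ?_)
  rw [Qc, Sc]
  field_simp

lemma hasDerivAt_Uc (hτ : 0 < τ) (i : Fin n) (j : Fin N) (hX : 0 < Xc a v i j t) :
    HasDerivAt (Uc τ a v i j) (-(τ * Uc τ a v i j t ^ 2)) t := by
  have hd : τ * Xc a v i j t ≠ 0 := (mul_pos hτ hX).ne'
  have h := (hasDerivAt_const t (v (i, j))).div ((hasDerivAt_Xc i j).const_mul τ) hd
  refine h.congr_deriv (Eq.symm ?_)
  rw [Uc]
  field_simp
  ring

lemma hasDerivAt_Sc (hτ : 0 < τ) (hN : 0 < N) (i : Fin n) (hX : ∀ j, 0 < Xc a v i j t) :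
    HasDerivAt (Sc τ g a v i) (SDc τ g a v i t) t := by
  have hZ : Zc τ g a v i t ≠ 0 := (Zc_pos hN i).ne'
  have hnum : HasDerivAt (fun t => ∑ j, Ec τ g a v i j t * Uc τ a v i j t)
      (∑ j, (Ec τ g a v i j t * Uc τ a v i j t * Uc τ a v i j t +
        Ec τ g a v i j t * -(τ * Uc τ a v i j t ^ 2))) t :=
    HasDerivAt.fun_sum (fun j _ =>
      (hasDerivAt_Ec hτ i j (hX j)).mul (hasDerivAt_Uc hτ i j (hX j)))
  have h := hnum.div (hasDerivAt_Zc hτ i hX) hZ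
  refine h.congr_deriv (Eq.symm ?_)
  rw [SDc]
  have hQ : ∀ j, Qc τ g a v i j t = Ec τ g a v i j t / Zc τ g a v i t := fun j => rfl
  have hS : Sc τ g a v i t = (∑ j, Ec τ g a v i j t * Uc τ a v i j t) / Zc τ g a v i t := rfl
  simp only [hQ, hS]
  rw [eq_div_iff (by positivity : (Zc τ g a v i t)^2 ≠ 0)]
  rw [Finset.sum_mul, Finset.sum_mul]
  rw [Finset.mul_sum, ← Finset.sum_sub_distrib]
  refine Finset.sum_congr rfl fun j _ => ?_
  field_simp
  ring

lemma hasDerivAt_prodQ (hτ : 0 < τ) (hN : 0 < N) (Φ : Fin n → Fin N)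
    (hX : ∀ i j, 0 < Xc a v i j t) :
    HasDerivAt (fun t => ∏ i, Qc τ g a v i (Φ i) t)
      ((∏ i, Qc τ g a v i (Φ i) t) * (∑ i, (Uc τ a v i (Φ i) t - Sc τ g a v i t))) t := by
  have h := HasDerivAt.fun_finsetProd (u := univ) (f := fun i t => Qc τ g a v i (Φ i) t)
    (f' := fun i => Qc τ g a v i (Φ i) t * (Uc τ a v i (Φ i) t - Sc τ g a v i t))
    (fun i _ => hasDerivAt_Qc hτ hN i (Φ i) (hX i))
  refine h.congr_deriv (Eq.symm ?_)
  rw [Finset.mul_sum]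
  refine Finset.sum_congr rfl fun i _ => ?_
  rw [smul_eq_mul, ← mul_assoc, Finset.prod_erase_mul _ _ (Finset.mem_univ i)]

end DerivLemmas

noncomputable def Phi (τ : ℝ) (g : Fin n → Fin N → ℝ) (a v : EuclideanSpace ℝ (Fin n × Fin N))
    (Lf : (Fin n → Fin N) → ℝ) (t : ℝ) : ℝ :=
  ∑ Φ : Fin n → Fin N, (∏ i, Qc τ g a v i (Φ i) t) * Lf Φ

noncomputable def Rc (τ : ℝ) (g : Fin n → Fin N → ℝ) (a v : EuclideanSpace ℝ (Fin n × Fin N))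
    (Φ : Fin n → Fin N) (t : ℝ) : ℝ :=
  ∑ i, (Uc τ a v i (Φ i) t - Sc τ g a v i t)

noncomputable def Phi1 (τ : ℝ) (g : Fin n → Fin N → ℝ) (a v : EuclideanSpace ℝ (Fin n × Fin N))
    (Lf : (Fin n → Fin N) → ℝ) (t : ℝ) : ℝ :=
  ∑ Φ : Fin n → Fin N, ((∏ i, Qc τ g a v i (Φ i) t) * Rc τ g a v Φ t) * Lf Φ

noncomputable def Phi2 (τ : ℝ) (g : Fin n → Fin N → ℝ) (a v : EuclideanSpace ℝ (Fin n × Fin N))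
    (Lf : (Fin n → Fin N) → ℝ) (t : ℝ) : ℝ :=
  ∑ Φ : Fin n → Fin N, ((∏ i, Qc τ g a v i (Φ i) t) *
    (Rc τ g a v Φ t ^ 2 +
      ∑ i, (-(τ * Uc τ a v i (Φ i) t ^ 2) - SDc τ g a v i t))) * Lf Φ

section PhiDeriv

variable {τ : ℝ} {g : Fin n → Fin N → ℝ} {a v : EuclideanSpace ℝ (Fin n × Fin N)}
  {Lf : (Fin n → Fin N) → ℝ} {t : ℝ}

lemma hasDerivAt_Phi (hτ : 0 < τ) (hN : 0 < N) (hX : ∀ i j, 0 < Xc a v i j t) :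
    HasDerivAt (Phi τ g a v Lf) (Phi1 τ g a v Lf t) t :=
  HasDerivAt.fun_sum fun Φ _ => (hasDerivAt_prodQ hτ hN Φ hX).mul_const (Lf Φ)

lemma hasDerivAt_Rc (hτ : 0 < τ) (hN : 0 < N) (Φ : Fin n → Fin N)
    (hX : ∀ i j, 0 < Xc a v i j t) :
    HasDerivAt (Rc τ g a v Φ)
      (∑ i, (-(τ * Uc τ a v i (Φ i) t ^ 2) - SDc τ g a v i t)) t :=
  HasDerivAt.fun_sum fun i _ =>
    (hasDerivAt_Uc hτ i (Φ i) (hX i (Φ i))).sub (hasDerivAt_Sc hτ hN i (hX i))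

lemma hasDerivAt_Phi1 (hτ : 0 < τ) (hN : 0 < N) (hX : ∀ i j, 0 < Xc a v i j t) :
    HasDerivAt (Phi1 τ g a v Lf) (Phi2 τ g a v Lf t) t := by
  refine HasDerivAt.fun_sum fun Φ _ => ?_
  have h := ((hasDerivAt_prodQ (g := g) hτ hN Φ hX).mul (hasDerivAt_Rc (g := g) hτ hN Φ hX)).mul_const (Lf Φ)
  refine h.congr_deriv (Eq.symm ?_)
  rw [Rc]
  ring

end PhiDeriv


section Comb

variable {q : Fin n → Fin N → ℝ}

lemma sum_pi_prod (F : Fin n → Fin N → ℝ) :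
    ∑ Φ : Fin n → Fin N, ∏ i, F i (Φ i) = ∏ i, ∑ j, F i j := by
  rw [Finset.prod_univ_sum, Fintype.piFinset_univ]

lemma marginal_one (hq1 : ∀ i, ∑ j, q i j = 1) (w : Fin n → Fin N → ℝ) (i : Fin n) :
    ∑ Φ : Fin n → Fin N, (∏ i', q i' (Φ i')) * w i (Φ i) = ∑ j, q i j * w i j := by
  have h1 : ∀ Φ : Fin n → Fin N, (∏ i', q i' (Φ i')) * w i (Φ i)
      = ∏ i', (q i' (Φ i') * if i = i' then w i (Φ i') else 1) := by
    intro Φ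
    rw [Finset.prod_mul_distrib, Finset.prod_ite_eq]
    simp
  rw [Finset.sum_congr rfl fun Φ _ => h1 Φ,
    sum_pi_prod (fun i' j => q i' j * if i = i' then w i j else 1)]
  rw [Finset.prod_eq_single i (fun b _ hb => ?_) (fun h => absurd (Finset.mem_univ i) h)]
  · simp
  · simp only [if_neg (Ne.symm hb)]
    simpa using hq1 b

lemma marginal_two (hq1 : ∀ i, ∑ j, q i j = 1) (w w' : Fin n → Fin N → ℝ) {i i' : Fin n}
    (hii' : i ≠ i') :
    ∑ Φ : Fin n → Fin N, (∏ k, q k (Φ k)) * (w i (Φ i) * w' i' (Φ i'))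
      = (∑ j, q i j * w i j) * (∑ j, q i' j * w' i' j) := by
  have h1 : ∀ Φ : Fin n → Fin N, (∏ k, q k (Φ k)) * (w i (Φ i) * w' i' (Φ i'))
      = ∏ k, (q k (Φ k) * ((if i = k then w i (Φ k) else 1) *
          (if i' = k then w' i' (Φ k) else 1))) := by
    intro Φ
    simp_rw [Finset.prod_mul_distrib, Finset.prod_ite_eq]
    simp
  rw [Finset.sum_congr rfl fun Φ _ => h1 Φ, sum_pi_prod
    (fun k j => q k j * ((if i = k then w i j else 1) * (if i' = k then w' i' j else 1)))]
  have h2 : ∀ k : Fin n, ∑ j, (q k j * ((if i = k then w i j else 1) *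
      (if i' = k then w' i' j else 1))) =
      if i = k then ∑ j, q i j * w i j else if i' = k then ∑ j, q i' j * w' i' j else 1 := by
    intro k
    rcases eq_or_ne i k with rfl | hik
    · simp [if_neg (show i' ≠ i from fun h => hii' h.symm)]
    · rcases eq_or_ne i' k with rfl | hik'
      · simp [if_neg hik]
      · simp only [if_neg hik, if_neg hik']
        simpa using hq1 k
  rw [Finset.prod_congr rfl fun k _ => h2 k]
  rw [← Finset.mul_prod_erase univ _ (Finset.mem_univ i)]
  have hi' : i' ∈ univ.erase i := Finset.mem_erase.2 ⟨Ne.symm hii', Finset.mem_univ i'⟩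
  rw [← Finset.mul_prod_erase _ _ hi']
  rw [Finset.prod_eq_one (fun k hk => ?_)]
  · rw [if_pos rfl, if_neg hii', if_pos rfl, mul_one]
  · rw [Finset.mem_erase, Finset.mem_erase] at hk
    rw [if_neg (fun h => hk.2.1 h.symm), if_neg (fun h => hk.1 h.symm)]

end Comb

section Comb2

variable {q w : Fin n → Fin N → ℝ}

lemma marginal_lin (hq1 : ∀ i, ∑ j, q i j = 1) (h : Fin n → Fin N → ℝ) :
    ∑ Φ : Fin n → Fin N, (∏ i, q i (Φ i)) * (∑ i, h i (Φ i))
      = ∑ i, ∑ j, q i j * h i j := by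
  simp_rw [Finset.mul_sum]
  rw [Finset.sum_comm]
  exact Finset.sum_congr rfl fun i _ => marginal_one hq1 h i

lemma var_sum (hq1 : ∀ i, ∑ j, q i j = 1) (hw : ∀ i, ∑ j, q i j * w i j = 0) :
    ∑ Φ : Fin n → Fin N, (∏ i, q i (Φ i)) * (∑ i, w i (Φ i)) ^ 2
      = ∑ i, ∑ j, q i j * w i j ^ 2 := by
  have hsq : ∀ Φ : Fin n → Fin N, (∑ i, w i (Φ i)) ^ 2
      = ∑ i, ∑ i', w i (Φ i) * w i' (Φ i') := by
    intro Φ; rw [sq, Finset.sum_mul_sum]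
  calc ∑ Φ : Fin n → Fin N, (∏ i, q i (Φ i)) * (∑ i, w i (Φ i)) ^ 2
      = ∑ i, ∑ i', ∑ Φ : Fin n → Fin N, (∏ k, q k (Φ k)) * (w i (Φ i) * w i' (Φ i')) := by
        simp_rw [hsq, Finset.mul_sum]
        rw [Finset.sum_comm]
        exact Finset.sum_congr rfl fun i _ => Finset.sum_comm
    _ = ∑ i, ∑ i', if i = i' then ∑ j, q i j * w i j ^ 2 else 0 := by
        refine Finset.sum_congr rfl fun i _ => Finset.sum_congr rfl fun i' _ => ?_
        rcases eq_or_ne i i' with rfl | hii'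
        · rw [if_pos rfl, marginal_one hq1 (fun i j => w i j * w i j) i]
          exact Finset.sum_congr rfl fun j _ => by ring
        · rw [if_neg hii', marginal_two hq1 w w hii', hw i, zero_mul]
    _ = ∑ i, ∑ j, q i j * w i j ^ 2 := by
        refine Finset.sum_congr rfl fun i _ => ?_
        rw [Finset.sum_ite_eq univ i (fun _ => ∑ j, q i j * w i j ^ 2), if_pos (Finset.mem_univ i)]

lemma core_bound (hq0 : ∀ i j, 0 ≤ q i j) (hq1 : ∀ i, ∑ j, q i j = 1)
    (hw : ∀ i, ∑ j, q i j * w i j = 0) (r : Fin n → Fin N → ℝ)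
    {G : ℝ} (hG : 0 ≤ G) (Lf : (Fin n → Fin N) → ℝ) (hLf : ∀ Φ, |Lf Φ| ≤ G) :
    |∑ Φ : Fin n → Fin N,
        ((∏ i, q i (Φ i)) * ((∑ i, w i (Φ i)) ^ 2 + ∑ i, r i (Φ i))) * Lf Φ|
      ≤ G * ∑ i, ∑ j, q i j * (w i j ^ 2 + |r i j|) := by
  have hP0 : ∀ Φ : Fin n → Fin N, 0 ≤ ∏ i, q i (Φ i) :=
    fun Φ => Finset.prod_nonneg fun i _ => hq0 i (Φ i)
  calc |∑ Φ : Fin n → Fin N,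
        ((∏ i, q i (Φ i)) * ((∑ i, w i (Φ i)) ^ 2 + ∑ i, r i (Φ i))) * Lf Φ|
      ≤ ∑ Φ : Fin n → Fin N,
        |((∏ i, q i (Φ i)) * ((∑ i, w i (Φ i)) ^ 2 + ∑ i, r i (Φ i))) * Lf Φ| :=
        Finset.abs_sum_le_sum_abs _ _
    _ ≤ ∑ Φ : Fin n → Fin N,
        ((∏ i, q i (Φ i)) * ((∑ i, w i (Φ i)) ^ 2 + ∑ i, |r i (Φ i)|)) * G := by
        refine Finset.sum_le_sum fun Φ _ => ?_
        rw [abs_mul, abs_mul]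
        have h1 : |∏ i, q i (Φ i)| = ∏ i, q i (Φ i) := abs_of_nonneg (hP0 Φ)
        have h2 : |(∑ i, w i (Φ i)) ^ 2 + ∑ i, r i (Φ i)|
            ≤ (∑ i, w i (Φ i)) ^ 2 + ∑ i, |r i (Φ i)| := by
          refine (abs_add_le _ _).trans ?_
          rw [abs_of_nonneg (sq_nonneg _)]
          exact add_le_add_right (Finset.abs_sum_le_sum_abs _ _) _
        rw [h1]
        have h3 : 0 ≤ (∑ i, w i (Φ i)) ^ 2 + ∑ i, |r i (Φ i)| := by positivity
        exact mul_le_mul (mul_le_mul_of_nonneg_left h2 (hP0 Φ)) (hLf Φ) (abs_nonneg _)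
          (mul_nonneg (hP0 Φ) h3)
    _ = G * ∑ i, ∑ j, q i j * (w i j ^ 2 + |r i j|) := by
        rw [← Finset.sum_mul, mul_comm]
        congr 1
        simp_rw [mul_add]
        rw [Finset.sum_add_distrib, var_sum hq1 hw, marginal_lin hq1 (fun i j => |r i j|),
          ← Finset.sum_add_distrib]
        exact Finset.sum_congr rfl fun i _ => by rw [← Finset.sum_add_distrib]

end Comb2

section Bound

variable {τ ν G : ℝ} {g : Fin n → Fin N → ℝ} {a v : EuclideanSpace ℝ (Fin n × Fin N)}
  {Lf : (Fin n → Fin N) → ℝ} {t : ℝ}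

lemma meanzero (hN : 0 < N) (i : Fin n) :
    ∑ j, Qc τ g a v i j t * (Uc τ a v i j t - Sc τ g a v i t) = 0 := by
  simp_rw [mul_sub]
  rw [Finset.sum_sub_distrib, ← Finset.sum_mul, Qc_sum hN i, one_mul, ← Sc_eq, sub_self]

lemma per_i_bound (hτ : 0 < τ) (hν : 0 < ν) (hN : 0 < N) (i : Fin n)
    (hX : ∀ j, ν ≤ Xc a v i j t) :
    ∑ j, Qc τ g a v i j t * ((Uc τ a v i j t - Sc τ g a v i t) ^ 2 +
        |-(τ * Uc τ a v i j t ^ 2) - SDc τ g a v i t|)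
      ≤ 2 * (1 + τ) * ∑ j, (v (i, j)) ^ 2 / (τ * ν) ^ 2 := by
  set Q := fun j => Qc τ g a v i j t with hQdef
  set U := fun j => Uc τ a v i j t with hUdef
  set S := Sc τ g a v i t with hSdef
  have hQ0 : ∀ j, 0 ≤ Q j := fun j => (Qc_pos hN i j).le
  have hQ1 : ∑ j, Q j = 1 := Qc_sum hN i
  have hQle : ∀ j, Q j ≤ 1 := fun j => Qc_le_one hN i j
  set m := ∑ j, Q j * U j ^ 2 with hmdef
  have hm0 : 0 ≤ m := Finset.sum_nonneg fun j _ => mul_nonneg (hQ0 j) (sq_nonneg _)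
  have hSU : S = ∑ j, Q j * U j := Sc_eq i
  have hS2 : S ^ 2 ≤ m := by
    have h := Finset.sum_mul_sq_le_sq_mul_sq univ (fun j => Real.sqrt (Q j))
      (fun j => Real.sqrt (Q j) * U j)
    have h1 : ∀ j, Real.sqrt (Q j) * (Real.sqrt (Q j) * U j) = Q j * U j := fun j => by
      rw [← mul_assoc, Real.mul_self_sqrt (hQ0 j)]
    have h2 : ∀ j, Real.sqrt (Q j) ^ 2 = Q j := fun j => Real.sq_sqrt (hQ0 j)
    have h3 : ∀ j, (Real.sqrt (Q j) * U j) ^ 2 = Q j * U j ^ 2 := fun j => by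
      rw [mul_pow, h2]
    simp_rw [h1, h2, h3] at h
    rw [hQ1, one_mul] at h
    rw [hSU, hmdef]
    exact h
  have hvar : ∑ j, Q j * (U j - S) ^ 2 = m - S ^ 2 := by
    have : ∀ j, Q j * (U j - S) ^ 2
        = Q j * U j ^ 2 - 2 * S * (Q j * U j) + S ^ 2 * Q j := fun j => by ring
    simp_rw [this]
    rw [Finset.sum_add_distrib, Finset.sum_sub_distrib, ← Finset.mul_sum, ← Finset.mul_sum,
      ← hSU, hQ1]
    ring
  have hvar0 : 0 ≤ m - S ^ 2 := hvar ▸ Finset.sum_nonneg fun j _ =>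
    mul_nonneg (hQ0 j) (sq_nonneg _)
  have hSD : SDc τ g a v i t = (m - S ^ 2) - τ * m := by
    rw [SDc, ← hvar]
    have : ∀ j, Q j * ((U j - S) * U j - τ * U j ^ 2)
        = Q j * (U j - S) ^ 2 + S * (Q j * (U j - S)) - τ * (Q j * U j ^ 2) := fun j => by ring
    show ∑ j, Q j * ((U j - S) * U j - τ * U j ^ 2) = _
    simp_rw [this]
    rw [Finset.sum_sub_distrib, Finset.sum_add_distrib, ← Finset.mul_sum, ← Finset.mul_sum,
      meanzero hN i, mul_zero, add_zero]
  have hSDabs : |SDc τ g a v i t| ≤ (m - S ^ 2) + τ * m := by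
    rw [hSD, abs_sub_le_iff]
    constructor <;> nlinarith [mul_nonneg hτ.le hm0]
  have hstep : ∑ j, Q j * ((U j - S) ^ 2 + |-(τ * U j ^ 2) - SDc τ g a v i t|)
      ≤ 2 * (1 + τ) * m := by
    have hterm : ∀ j, Q j * ((U j - S) ^ 2 + |-(τ * U j ^ 2) - SDc τ g a v i t|)
        ≤ Q j * (U j - S) ^ 2 + (τ * (Q j * U j ^ 2) + |SDc τ g a v i t| * Q j) := by
      intro j
      have habs : |-(τ * U j ^ 2) - SDc τ g a v i t| ≤ τ * U j ^ 2 + |SDc τ g a v i t| := by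
        have := abs_sub (-(τ * U j ^ 2)) (SDc τ g a v i t)
        calc |-(τ * U j ^ 2) - SDc τ g a v i t|
            ≤ |-(τ * U j ^ 2)| + |SDc τ g a v i t| := abs_sub _ _
          _ = τ * U j ^ 2 + |SDc τ g a v i t| := by
              rw [abs_neg, abs_of_nonneg (by positivity)]
      calc Q j * ((U j - S) ^ 2 + |-(τ * U j ^ 2) - SDc τ g a v i t|)
          ≤ Q j * ((U j - S) ^ 2 + (τ * U j ^ 2 + |SDc τ g a v i t|)) := by
            exact mul_le_mul_of_nonneg_left (add_le_add_right habs _) (hQ0 j)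
        _ = Q j * (U j - S) ^ 2 + (τ * (Q j * U j ^ 2) + |SDc τ g a v i t| * Q j) := by ring
    calc ∑ j, Q j * ((U j - S) ^ 2 + |-(τ * U j ^ 2) - SDc τ g a v i t|)
        ≤ ∑ j, (Q j * (U j - S) ^ 2 + (τ * (Q j * U j ^ 2) + |SDc τ g a v i t| * Q j)) :=
          Finset.sum_le_sum fun j _ => hterm j
      _ = (m - S ^ 2) + (τ * m + |SDc τ g a v i t|) := by
          rw [Finset.sum_add_distrib, Finset.sum_add_distrib, hvar, ← Finset.mul_sum,
            ← Finset.mul_sum, hQ1, ← hmdef, mul_one]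
      _ ≤ 2 * (1 + τ) * m := by nlinarith [hSDabs, hvar0, hm0, sq_nonneg S]
  have hmle : m ≤ ∑ j, (v (i, j)) ^ 2 / (τ * ν) ^ 2 := by
    refine Finset.sum_le_sum fun j _ => ?_
    have hXj : 0 < Xc a v i j t := lt_of_lt_of_le hν (hX j)
    have hU2 : U j ^ 2 ≤ (v (i, j)) ^ 2 / (τ * ν) ^ 2 := by
      show Uc τ a v i j t ^ 2 ≤ _
      rw [Uc, div_pow]
      refine div_le_div_of_nonneg_left (sq_nonneg _) (by positivity) ?_
      exact pow_le_pow_left₀ (by positivity) (mul_le_mul_of_nonneg_left (hX j) hτ.le) 2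
    calc Q j * U j ^ 2 ≤ 1 * U j ^ 2 := by
          exact mul_le_mul_of_nonneg_right (hQle j) (sq_nonneg _)
      _ = U j ^ 2 := one_mul _
      _ ≤ (v (i, j)) ^ 2 / (τ * ν) ^ 2 := hU2
  calc ∑ j, Q j * ((U j - S) ^ 2 + |-(τ * U j ^ 2) - SDc τ g a v i t|)
      ≤ 2 * (1 + τ) * m := hstep
    _ ≤ 2 * (1 + τ) * ∑ j, (v (i, j)) ^ 2 / (τ * ν) ^ 2 := by
        refine mul_le_mul_of_nonneg_left hmle (by positivity)

lemma abs_Phi2_le (hτ : 0 < τ) (hν : 0 < ν) (hN : 0 < N) (hG : 0 ≤ G)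
    (hLf : ∀ Φ, |Lf Φ| ≤ G) (hX : ∀ (i : Fin n) (j : Fin N), ν ≤ Xc a v i j t) :
    |Phi2 τ g a v Lf t|
      ≤ G * (2 * (1 + τ) * ∑ i, ∑ j, (v (i, j)) ^ 2 / (τ * ν) ^ 2) := by
  have hcore := core_bound (q := fun i j => Qc τ g a v i j t)
    (w := fun i j => Uc τ a v i j t - Sc τ g a v i t)
    (fun i j => (Qc_pos hN i j).le) (fun i => Qc_sum hN i)
    (fun i => meanzero hN i)
    (fun i j => -(τ * Uc τ a v i j t ^ 2) - SDc τ g a v i t) hG Lf hLf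
  have heq : Phi2 τ g a v Lf t = ∑ Φ : Fin n → Fin N,
      ((∏ i, Qc τ g a v i (Φ i) t) *
        ((∑ i, (Uc τ a v i (Φ i) t - Sc τ g a v i t)) ^ 2 +
          ∑ i, (-(τ * Uc τ a v i (Φ i) t ^ 2) - SDc τ g a v i t))) * Lf Φ := rfl
  rw [heq]
  refine hcore.trans ?_
  refine mul_le_mul_of_nonneg_left ?_ hG
  rw [Finset.mul_sum]
  refine Finset.sum_le_sum fun i _ => ?_
  exact per_i_bound hτ hν hN i (fun j => hX i j)

end Bound

lemma taylor_aux {φ φ1 φ2 : ℝ → ℝ} {C : ℝ} (hC : 0 ≤ C)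
    (h1 : ∀ t ∈ Set.Icc (0:ℝ) 1, HasDerivAt φ (φ1 t) t)
    (h2 : ∀ t ∈ Set.Icc (0:ℝ) 1, HasDerivAt φ1 (φ2 t) t)
    (hb : ∀ t ∈ Set.Icc (0:ℝ) 1, |φ2 t| ≤ C) :
    φ 1 - φ 0 ≤ φ1 0 + C / 2 := by
  have hstep : ∀ t ∈ Set.Icc (0:ℝ) 1, φ1 t - φ1 0 ≤ C * t := by
    intro t ht
    have h := Convex.norm_image_sub_le_of_norm_hasDerivWithin_le
      (f := φ1) (f' := φ2) (s := Set.Icc 0 1)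
      (fun x hx => (h2 x hx).hasDerivWithinAt) (fun x hx => by simpa using hb x hx)
      (convex_Icc 0 1) (Set.left_mem_Icc.2 zero_le_one) ht
    rw [Real.norm_eq_abs, Real.norm_eq_abs] at h
    calc φ1 t - φ1 0 ≤ C * |t - 0| := le_of_abs_le h
      _ = C * t := by rw [sub_zero, abs_of_nonneg ht.1]
  have hd : ∀ t ∈ Set.Icc (0:ℝ) 1,
      HasDerivAt (fun t => C * t ^ 2 / 2 + t * φ1 0 - φ t) (C * t + φ1 0 - φ1 t) t := by
    intro t ht
    have hpoly : HasDerivAt (fun t : ℝ => C * t ^ 2 / 2 + t * φ1 0) (C * t + φ1 0) t := by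
      have hp1 : HasDerivAt (fun t : ℝ => C * t ^ 2 / 2) (C * t) t := by
        have := ((hasDerivAt_pow 2 t).const_mul C).div_const 2
        refine this.congr_deriv (Eq.symm ?_)
        ring
      have hp2 : HasDerivAt (fun t : ℝ => t * φ1 0) (φ1 0) t := by
        simpa using (hasDerivAt_id t).mul_const (φ1 0)
      exact hp1.add hp2
    exact hpoly.sub (h1 t ht)
  have hmono : MonotoneOn (fun t => C * t ^ 2 / 2 + t * φ1 0 - φ t) (Set.Icc 0 1) := by
    refine monotoneOn_of_deriv_nonneg (convex_Icc 0 1)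
      (fun t ht => (hd t ht).continuousAt.continuousWithinAt) (fun t ht => ?_) (fun t ht => ?_)
    · rw [interior_Icc] at ht
      exact ((hd t (Set.mem_Icc_of_Ioo ht)).differentiableAt).differentiableWithinAt
    · rw [interior_Icc] at ht
      rw [(hd t (Set.mem_Icc_of_Ioo ht)).deriv]
      have := hstep t (Set.mem_Icc_of_Ioo ht)
      linarith
  have hkey := hmono (Set.left_mem_Icc.2 zero_le_one) (Set.right_mem_Icc.2 zero_le_one)
    zero_le_one
  simp only [one_pow, mul_one, zero_pow, mul_zero, zero_mul, zero_div, zero_add,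
    add_zero] at hkey
  linarith

end ELSmooth

open ELSmooth in
/-- L-smoothness of the expected loss `E_{Φ~GS(α)}[L(Φ,Ψ)]` as a function of the parameter
matrix `α` (entries `≥ ν > 0`), with smoothness constant `L = nGN(τ+1)/(τ²ν²)`. -/
theorem expected_loss_L_smooth
    (n N : ℕ) (τ ν G : ℝ) (hτ : 0 < τ) (hν : 0 < ν) (hG : 0 ≤ G)
    (g : Fin n → Fin N → ℝ)
    (Lf : (Fin n → Fin N) → ℝ) (hLf : ∀ Φ, |Lf Φ| ≤ G)
    (p : EuclideanSpace ℝ (Fin n × Fin N) → Fin n → Fin N → ℝ)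
    (hp : ∀ a i j, p a i j =
      Real.exp ((Real.log (a (i, j)) + g i j) / τ) /
        ∑ l : Fin N, Real.exp ((Real.log (a (i, l)) + g i l) / τ))
    (f : EuclideanSpace ℝ (Fin n × Fin N) → ℝ)
    (hf : ∀ a, f a = ∑ Φ : Fin n → Fin N, (∏ i, p a i (Φ i)) * Lf Φ) :
    ∀ a a' : EuclideanSpace ℝ (Fin n × Fin N),
      (∀ ij, ν ≤ a ij) → (∀ ij, ν ≤ a' ij) →
      f a' - f a ≤ ⟪gradient f a, a' - a⟫ +
        (n * G * N * (τ + 1) / (τ ^ 2 * ν ^ 2)) / 2 * ‖a' - a‖ ^ 2 := by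
  intro a a' ha ha'
  have hτ1 : (0:ℝ) ≤ τ + 1 := by linarith
  have hRHS0 : 0 ≤ (n * G * N * (τ + 1) / (τ ^ 2 * ν ^ 2)) / 2 * ‖a' - a‖ ^ 2 := by
    have h1 : (0:ℝ) ≤ n * G * N * (τ + 1) := by positivity
    have h2 : (0:ℝ) < τ ^ 2 * ν ^ 2 := by positivity
    positivity
  -- constant cases
  have hconst_done : (∀ b, f b = f a) →
      f a' - f a ≤ ⟪gradient f a, a' - a⟫ +
        (n * G * N * (τ + 1) / (τ ^ 2 * ν ^ 2)) / 2 * ‖a' - a‖ ^ 2 := by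
    intro hc
    have hfa : f = fun _ => f a := funext hc
    rw [hc a']
    rw [hfa, gradient_fun_const, inner_zero_left]
    simpa using hRHS0
  by_cases hn0 : n = 0
  · refine hconst_done fun b => ?_
    subst hn0
    rw [hf, hf]
    simp
  by_cases hN0 : N = 0
  · refine hconst_done fun b => ?_
    subst hN0
    haveI : IsEmpty (Fin n → Fin 0) :=
      ⟨fun Φ => (Φ ⟨0, Nat.pos_of_ne_zero hn0⟩).elim0⟩
    rw [hf, hf, Finset.univ_eq_empty, Finset.sum_empty, Finset.sum_empty]
  by_cases hN1 : N = 1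
  · refine hconst_done fun b => ?_
    subst hN1
    have hp1 : ∀ b (i : Fin n) (j : Fin 1), p b i j = 1 := by
      intro b i j
      rw [hp, Fin.sum_univ_one, Subsingleton.elim j 0]
      exact div_self (Real.exp_ne_zero _)
    rw [hf, hf]
    refine Finset.sum_congr rfl fun Φ _ => ?_
    rw [Finset.prod_congr rfl fun i _ => hp1 b i (Φ i),
      Finset.prod_congr rfl fun i _ => hp1 a i (Φ i)]
    
  -- main case
  have hNpos : 0 < N := Nat.pos_of_ne_zero hN0
  have hnN2 : 2 ≤ n * N := by
    have h1 : 1 ≤ n := Nat.one_le_iff_ne_zero.2 hn0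
    have h2 : 2 ≤ N := by omega
    calc 2 = 1 * 2 := by ring
      _ ≤ n * N := Nat.mul_le_mul h1 h2
  set v : EuclideanSpace ℝ (Fin n × Fin N) := a' - a with hvdef
  have hvap : ∀ ij : Fin n × Fin N, v ij = a' ij - a ij := fun ij => rfl
  have hXeq : ∀ (t : ℝ) (ij : Fin n × Fin N), (a + t • v) ij = Xc a v ij.1 ij.2 t := by
    intro t ij
    rw [Xc]
    simp [Prod.mk.eta]
  have hXν : ∀ t ∈ Set.Icc (0:ℝ) 1, ∀ (i : Fin n) (j : Fin N), ν ≤ Xc a v i j t := by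
    intro t ht i j
    rw [Xc, hvap]
    have h1 := ha (i, j)
    have h2 := ha' (i, j)
    nlinarith [ht.1, ht.2]
  have hXpos : ∀ t ∈ Set.Icc (0:ℝ) 1, ∀ (i : Fin n) (j : Fin N), 0 < Xc a v i j t :=
    fun t ht i j => lt_of_lt_of_le hν (hXν t ht i j)
  -- identification of f along the segment with Phi
  have hphi_eq : ∀ t : ℝ, f (a + t • v) = Phi τ g a v Lf t := by
    intro t
    rw [hf, Phi]
    refine Finset.sum_congr rfl fun Φ _ => ?_
    congr 1
    refine Finset.prod_congr rfl fun i _ => ?_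
    rw [hp]
    have hnum : ∀ j : Fin N,
        Real.exp ((Real.log ((a + t • v) (i, j)) + g i j) / τ) = Ec τ g a v i j t :=
      fun j => by rw [Ec, hXeq t (i, j)]
    rw [Qc, Zc, hnum (Φ i), Finset.sum_congr rfl fun l _ => hnum l]
  have hfun_eq : (fun t : ℝ => f (a + t • v)) = Phi τ g a v Lf := funext hphi_eq
  -- differentiability of f at a
  have hdf : DifferentiableAt ℝ f a := by
    have hfF : f = fun b : EuclideanSpace ℝ (Fin n × Fin N) =>
        ∑ Φ : Fin n → Fin N, (∏ i,
          (Real.exp ((Real.log (b (i, Φ i)) + g i (Φ i)) / τ) /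
            ∑ l : Fin N, Real.exp ((Real.log (b (i, l)) + g i l) / τ))) * Lf Φ := by
      funext b
      rw [hf]
      exact Finset.sum_congr rfl fun Φ _ => by
        rw [Finset.prod_congr rfl fun i _ => hp b i (Φ i)]
    rw [hfF]
    have hproj : ∀ ij : Fin n × Fin N,
        DifferentiableAt ℝ (fun b : EuclideanSpace ℝ (Fin n × Fin N) => b ij) a := by
      intro ij
      exact (EuclideanSpace.proj (𝕜 := ℝ) ij).differentiableAt
    have hE : ∀ (i : Fin n) (j : Fin N),
        DifferentiableAt ℝ (fun b : EuclideanSpace ℝ (Fin n × Fin N) =>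
          Real.exp ((Real.log (b (i, j)) + g i j) * τ⁻¹)) a := by
      intro i j
      have h0 : a (i, j) ≠ 0 := (lt_of_lt_of_le hν (ha (i, j))).ne'
      have h1 : DifferentiableAt ℝ
          (fun b : EuclideanSpace ℝ (Fin n × Fin N) => Real.log (b (i, j))) a :=
        (hproj (i, j)).log h0
      exact ((h1.add_const (g i j)).mul_const τ⁻¹).exp
    have hne : ∀ i : Fin n,
        (∑ l : Fin N, Real.exp ((Real.log (a (i, l)) + g i l) * τ⁻¹)) ≠ 0 := by
      intro i
      have : (0:ℝ) < ∑ l : Fin N, Real.exp ((Real.log (a (i, l)) + g i l) * τ⁻¹) :=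
        Finset.sum_pos (fun l _ => Real.exp_pos _)
          (univ_nonempty_iff.2 (Fin.pos_iff_nonempty.1 hNpos))
      exact this.ne'
    have hprodd : ∀ Φ : Fin n → Fin N,
        DifferentiableAt ℝ (fun b : EuclideanSpace ℝ (Fin n × Fin N) =>
          ∏ i, (Real.exp ((Real.log (b (i, Φ i)) + g i (Φ i)) * τ⁻¹) *
            (∑ l : Fin N, Real.exp ((Real.log (b (i, l)) + g i l) * τ⁻¹))⁻¹)) a := by
      intro Φ
      have hfac : ∀ i : Fin n, DifferentiableAt ℝ
          (fun b : EuclideanSpace ℝ (Fin n × Fin N) =>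
            Real.exp ((Real.log (b (i, Φ i)) + g i (Φ i)) * τ⁻¹) *
              (∑ l : Fin N, Real.exp ((Real.log (b (i, l)) + g i l) * τ⁻¹))⁻¹) a :=
        fun i => (hE i (Φ i)).mul ((DifferentiableAt.fun_sum fun l _ => hE i l).inv (hne i))
      exact (HasFDerivAt.finset_prod (u := univ)
        (fun i _ => (hfac i).hasFDerivAt)).differentiableAt
    simp only [div_eq_mul_inv]
    exact DifferentiableAt.fun_sum fun Φ _ => (hprodd Φ).mul_const (Lf Φ)
  -- chain rule : derivative of f along the segment at 0
  have hc : HasDerivAt (fun t : ℝ => a + t • v) v 0 := by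
    simpa using ((hasDerivAt_id (0:ℝ)).smul_const v).const_add a
  have hchain : HasDerivAt (fun t : ℝ => f (a + t • v)) (fderiv ℝ f a v) 0 := by
    have h0v : a + (0:ℝ) • v = a := by simp
    have hfd : HasFDerivAt f (fderiv ℝ f a) (a + (0:ℝ) • v) := by
      rw [h0v]; exact hdf.hasFDerivAt
    have h := hfd.comp_hasDerivAt 0 hc
    exact h
  have hPhi_deriv0 : HasDerivAt (Phi τ g a v Lf) (Phi1 τ g a v Lf 0) 0 :=
    hasDerivAt_Phi hτ hNpos (hXpos 0 (Set.left_mem_Icc.2 zero_le_one))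
  have huniq : fderiv ℝ f a v = Phi1 τ g a v Lf 0 := by
    rw [hfun_eq] at hchain
    exact hchain.unique hPhi_deriv0
  have hgrad : ⟪gradient f a, a' - a⟫ = Phi1 τ g a v Lf 0 := by
    rw [← huniq, ← hvdef]
    exact InnerProductSpace.toDual_symm_apply
  -- Taylor estimate
  set C0 : ℝ := G * (2 * (1 + τ) * ∑ i, ∑ j, (v (i, j)) ^ 2 / (τ * ν) ^ 2) with hC0def
  have hC0 : 0 ≤ C0 := by
    have : (0:ℝ) ≤ ∑ i : Fin n, ∑ j : Fin N, (v (i, j)) ^ 2 / (τ * ν) ^ 2 :=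
      Finset.sum_nonneg fun i _ => Finset.sum_nonneg fun j _ => by positivity
    have h2 : (0:ℝ) ≤ 2 * (1 + τ) := by linarith
    exact mul_nonneg hG (mul_nonneg h2 this)
  have htaylor : Phi τ g a v Lf 1 - Phi τ g a v Lf 0 ≤ Phi1 τ g a v Lf 0 + C0 / 2 := by
    refine taylor_aux hC0 (fun t ht => hasDerivAt_Phi hτ hNpos (hXpos t ht))
      (fun t ht => hasDerivAt_Phi1 hτ hNpos (hXpos t ht)) (fun t ht => ?_)
    exact abs_Phi2_le hτ hν hNpos hG hLf (hXν t ht)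
  have hfa' : f a' = Phi τ g a v Lf 1 := by
    rw [← hphi_eq 1, one_smul, hvdef, add_sub_cancel]
  have hfa : f a = Phi τ g a v Lf 0 := by
    rw [← hphi_eq 0, zero_smul, add_zero]
  -- norm identity
  have hnorm : ‖a' - a‖ ^ 2 = ∑ i, ∑ j, (v (i, j)) ^ 2 := by
    rw [← hvdef, EuclideanSpace.norm_eq, Real.sq_sqrt (Finset.sum_nonneg fun ij _ => by
      positivity)]
    rw [Fintype.sum_prod_type]
    exact Finset.sum_congr rfl fun i _ => Finset.sum_congr rfl fun j _ => by
      rw [Real.norm_eq_abs, sq_abs]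
  -- compare constants
  have hsum0 : (0:ℝ) ≤ ∑ i : Fin n, ∑ j : Fin N, (v (i, j)) ^ 2 :=
    Finset.sum_nonneg fun i _ => Finset.sum_nonneg fun j _ => sq_nonneg _
  have hdiv : ∑ i : Fin n, ∑ j : Fin N, (v (i, j)) ^ 2 / (τ * ν) ^ 2
      = (∑ i : Fin n, ∑ j : Fin N, (v (i, j)) ^ 2) / (τ ^ 2 * ν ^ 2) := by
    rw [Finset.sum_div]
    refine Finset.sum_congr rfl fun i _ => ?_
    rw [Finset.sum_div]
    exact Finset.sum_congr rfl fun j _ => by rw [mul_pow]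
  have hcomp : C0 ≤ (n * G * N * (τ + 1) / (τ ^ 2 * ν ^ 2)) * ‖a' - a‖ ^ 2 := by
    rw [hnorm, hC0def, hdiv]
    have h2nN : (2:ℝ) ≤ (n : ℝ) * N := by exact_mod_cast hnN2
    have hkey : G * (2 * (1 + τ)) ≤ (n : ℝ) * G * N * (τ + 1) := by
      nlinarith [mul_nonneg hG hτ1]
    have hpos : (0:ℝ) ≤ (∑ i : Fin n, ∑ j : Fin N, (v (i, j)) ^ 2) / (τ ^ 2 * ν ^ 2) := by
      positivity
    calc G * (2 * (1 + τ) * ((∑ i : Fin n, ∑ j : Fin N, (v (i, j)) ^ 2) / (τ ^ 2 * ν ^ 2)))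
        = (G * (2 * (1 + τ))) * ((∑ i : Fin n, ∑ j : Fin N, (v (i, j)) ^ 2) / (τ ^ 2 * ν ^ 2)) :=
          by ring
      _ ≤ ((n : ℝ) * G * N * (τ + 1)) *
          ((∑ i : Fin n, ∑ j : Fin N, (v (i, j)) ^ 2) / (τ ^ 2 * ν ^ 2)) :=
          mul_le_mul_of_nonneg_right hkey hpos
      _ = ((n : ℝ) * G * N * (τ + 1) / (τ ^ 2 * ν ^ 2)) *
          (∑ i : Fin n, ∑ j : Fin N, (v (i, j)) ^ 2) := by ring
  rw [hfa', hfa, hgrad]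
  have hhalf : (n * G * N * (τ + 1) / (τ ^ 2 * ν ^ 2)) / 2 * ‖a' - a‖ ^ 2
      = ((n * G * N * (τ + 1) / (τ ^ 2 * ν ^ 2)) * ‖a' - a‖ ^ 2) / 2 := by ring
  rw [hhalf]
  linarith [htaylor, hcomp]
end

section
/- With η = min{1/(Lλ), 1/√T, 1/L}, batch size B = √T, and prompt sample count I = T^{1/4}, the Fed-BDPL average squared gradient norm bound becomes (1/T) Σ_{t=0}^{T-1} ‖∇F(α_t)‖² ≤ (1/√T)[4G + 2nσ_ψ² + 2nσ_α² + 2(E+1)nσ_ψ²(1+1/K*) + 2(E+1)nσ_α²(1+1/K*)], hence Fed-BDPL converges at rate O(1/√T). -/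
open Finset

/-- Convergence rate of Fed-BDPL: substituting `η = min{1/(Lλ), 1/√T, 1/L}` (with `T` large
enough that the minimum is `1/√T`), batch size `B = √T`, and prompt sample count
`I = T^{1/4}` (so `I² = √T`) into the Fed-BDPL convergence bound yields an `O(1/√T)`
rate. -/
theorem fed_bdpl_convergence_rate
    (S G Lc lam σψ2 σα2 : ℝ) (n E Kstar T : ℕ)
    (hG : 0 ≤ G) (hLc : 0 < Lc) (hlam : 1 ≤ lam) (hσψ : 0 ≤ σψ2) (hσα : 0 ≤ σα2)
    (hKstar : 1 ≤ Kstar) (hE : 1 ≤ E) (hT : 1 ≤ T)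
    (hT1 : (Lc * lam) ^ 2 ≤ T) (hT2 : Lc ^ 2 ≤ T)
    (η B I2 : ℝ)
    (hη : η = min (1 / (Lc * lam)) (min (1 / Real.sqrt T) (1 / Lc)))
    (hBdef : B = Real.sqrt T) (hI2 : I2 = Real.sqrt T)
    -- the Fed-BDPL convergence bound (Theorem 1) for the averaged squared gradient norm S
    (hbound : S ≤ 4 * G / (η * T)
      + (2 * (E + 1) * n * σψ2 * (1 + 1 / (Kstar : ℝ)) + 2 * n * σψ2) / B
      + (2 * (E + 1) * n * σα2 * (1 + 1 / (Kstar : ℝ)) + 2 * n * σα2) / I2) :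
    S ≤ (1 / Real.sqrt T) *
      (4 * G + 2 * n * σψ2 + 2 * n * σα2
        + 2 * (E + 1) * n * σψ2 * (1 + 1 / (Kstar : ℝ))
        + 2 * (E + 1) * n * σα2 * (1 + 1 / (Kstar : ℝ))) := by
  have hT0 : (0:ℝ) < T := by positivity
  have hs : 0 < Real.sqrt T := Real.sqrt_pos.mpr hT0
  have hLl : 0 < Lc * lam := by nlinarith
  have h1 : Lc * lam ≤ Real.sqrt T := by
    rw [show (T:ℝ) = Real.sqrt T * Real.sqrt T from (Real.mul_self_sqrt hT0.le).symm] at hT1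
    nlinarith
  have h2 : Lc ≤ Real.sqrt T := by
    rw [show (T:ℝ) = Real.sqrt T * Real.sqrt T from (Real.mul_self_sqrt hT0.le).symm] at hT2
    nlinarith
  have hηs : η = 1 / Real.sqrt T := by
    rw [hη, min_eq_left (one_div_le_one_div_of_le hLc h2),
      min_eq_right (one_div_le_one_div_of_le hLl h1)]
  have hηT : η * T = Real.sqrt T := by
    rw [hηs]
    field_simp
    exact (Real.sq_sqrt hT0.le).symm
  have hKs : (0:ℝ) < (Kstar:ℝ) := by exact_mod_cast hKstar
  have key : 4 * G / (η * T)
      + (2 * (E + 1) * n * σψ2 * (1 + 1 / (Kstar : ℝ)) + 2 * n * σψ2) / B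
      + (2 * (E + 1) * n * σα2 * (1 + 1 / (Kstar : ℝ)) + 2 * n * σα2) / I2
      = (1 / Real.sqrt T) *
      (4 * G + 2 * n * σψ2 + 2 * n * σα2
        + 2 * (E + 1) * n * σψ2 * (1 + 1 / (Kstar : ℝ))
        + 2 * (E + 1) * n * σα2 * (1 + 1 / (Kstar : ℝ))) := by
    rw [hηT, hBdef, hI2]
    field_simp
    ring
  linarith [hbound, key.le]
end
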